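/- Let (f_n) be a sequence of continuously differentiable real functions on the interval (0, L] converging pointwise to a continuously differentiable function f, and suppose |x·f_n'(x)| ≤ M for all n and all x ∈ (0, L]. Then |x·f'(x)| ≤ M for all x ∈ (0, L]. -/

import Mathlib

theorem scaled_deriv_bound_of_pointwise_limit (L : ℝ) (hL : 0 < L)
    (f : ℕ → ℝ → ℝ) (f' : ℕ → ℝ → ℝ) (g g' : ℝ → ℝ) (M : ℝ) (hM : 0 ≤ M)
    (hf : ∀ n, ∀ x ∈ Set.Ioc 0 L, HasDerivWithinAt (f n) (f' n x) (Set.Ioc 0 L) x)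
    (hf'c : ∀ n, ContinuousOn (f' n) (Set.Ioc 0 L))
    (hg : ∀ x ∈ Set.Ioc 0 L, HasDerivWithinAt g (g' x) (Set.Ioc 0 L) x)
    (hg'c : ContinuousOn g' (Set.Ioc 0 L))
    (hconv : ∀ x ∈ Set.Ioc 0 L, Filter.Tendsto (fun n => f n x) Filter.atTop (nhds (g x)))
    (hbnd : ∀ n, ∀ x ∈ Set.Ioc 0 L, |x * f' n x| ≤ M) :
    ∀ x ∈ Set.Ioc 0 L, |x * g' x| ≤ M := by
  intro x₀ hx₀
  obtain ⟨hx₀pos, hx₀L⟩ := hx₀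
  -- Key: for every c ∈ (0, x₀), |g' x₀| ≤ M / c
  have key : ∀ c, 0 < c → c < x₀ → |g' x₀| ≤ M / c := by
    intro c hc hcx
    have hsub : Set.Icc c L ⊆ Set.Ioc 0 L := fun y hy => ⟨lt_of_lt_of_le hc hy.1, hy.2⟩
    -- each f n is (M/c)-Lipschitz on [c, L]
    have hlip : ∀ n, ∀ y ∈ Set.Icc c L, ∀ z ∈ Set.Icc c L,
        ‖f n y - f n z‖ ≤ M / c * ‖y - z‖ := by
      intro n y hy z hz
      refine (convex_Icc c L).norm_image_sub_le_of_norm_hasDerivWithin_le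
        (fun w hw => (hf n w (hsub hw)).mono hsub) ?_ hz hy
      intro w hw
      have hwpos : 0 < w := lt_of_lt_of_le hc hw.1
      have hbw := hbnd n w (hsub hw)
      rw [abs_mul, abs_of_pos hwpos] at hbw
      rw [Real.norm_eq_abs, le_div_iff₀ hc]
      calc |f' n w| * c ≤ |f' n w| * w := by
            exact mul_le_mul_of_nonneg_left hw.1 (abs_nonneg _)
        _ = w * |f' n w| := mul_comm _ _
        _ ≤ M := hbw
    -- g inherits the Lipschitz bound on [c, L]
    have glip : ∀ y ∈ Set.Icc c L, ∀ z ∈ Set.Icc c L,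
        ‖g y - g z‖ ≤ M / c * ‖y - z‖ := by
      intro y hy z hz
      have ht : Filter.Tendsto (fun n => ‖f n y - f n z‖) Filter.atTop (nhds ‖g y - g z‖) :=
        ((hconv y (hsub hy)).sub (hconv z (hsub hz))).norm
      exact le_of_tendsto ht (Filter.Eventually.of_forall fun n => hlip n y hy z hz)
    -- derivative of g within Icc c L at x₀
    have hx₀mem : x₀ ∈ Set.Icc c L := ⟨le_of_lt hcx, hx₀L⟩
    have hd : HasDerivWithinAt g (g' x₀) (Set.Icc c L) x₀ :=
      (hg x₀ ⟨hx₀pos, hx₀L⟩).mono hsub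
    have hslope := hasDerivWithinAt_iff_tendsto_slope.mp hd
    -- restrict to Ico c x₀, a nontrivial filter
    have hsub2 : Set.Ico c x₀ ⊆ Set.Icc c L \ {x₀} := by
      intro y hy
      exact ⟨⟨hy.1, le_trans (le_of_lt hy.2) hx₀L⟩, ne_of_lt hy.2⟩
    have hslope2 : Filter.Tendsto (slope g x₀) (nhdsWithin x₀ (Set.Ico c x₀)) (nhds (g' x₀)) :=
      hslope.mono_left (nhdsWithin_mono _ hsub2)
    have hne : (nhdsWithin x₀ (Set.Ico c x₀)).NeBot := by
      rw [nhdsWithin_Ico_eq_nhdsLT hcx]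
      infer_instance
    refine le_of_tendsto hslope2.abs ?_
    filter_upwards [self_mem_nhdsWithin] with y hy
    have hyne : y ≠ x₀ := ne_of_lt hy.2
    rw [slope_def_field, abs_div]
    rw [div_le_iff₀ (abs_pos.mpr (sub_ne_zero.mpr hyne))]
    calc |g y - g x₀| ≤ M / c * ‖y - x₀‖ :=
          glip y ⟨hy.1, le_trans (le_of_lt hy.2) hx₀L⟩ x₀ hx₀mem
      _ = M / c * |y - x₀| := rfl
  -- let c → x₀⁻
  have hfin : |g' x₀| ≤ M / x₀ := by
    have h1 : Filter.Tendsto (fun c : ℝ => M / c) (nhdsWithin x₀ (Set.Iio x₀))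
        (nhds (M / x₀)) :=
      (tendsto_const_nhds.div Filter.tendsto_id hx₀pos.ne').mono_left nhdsWithin_le_nhds
    refine ge_of_tendsto h1 ?_
    have hpos : ∀ᶠ c in nhdsWithin x₀ (Set.Iio x₀), 0 < c :=
      eventually_nhdsWithin_of_eventually_nhds (eventually_gt_nhds hx₀pos)
    filter_upwards [self_mem_nhdsWithin, hpos] with c hc hcpos
    exact key c hcpos hc
  calc |x₀ * g' x₀| = x₀ * |g' x₀| := by rw [abs_mul, abs_of_pos hx₀pos]
    _ ≤ x₀ * (M / x₀) := mul_le_mul_of_nonneg_left hfin (le_of_lt hx₀pos)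
    _ = M := by field_simp
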